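/- For every integer k ≥ 2 and every positive integer n divisible by 4k, there exists a graph G on n vertices with odd girth at least 2k+1, with minimum degree δ(G) = 3n/(4k), which is not homomorphic to the cycle C_{2k+1} of length 2k+1. (In particular, the minimum degree bound 3n/(4k) in the main theorem cannot be lowered.) -/

import Mathlib

open SimpleGraph Finset

private def Mg (k : ℕ) : SimpleGraph (ZMod (4*k)) :=
  SimpleGraph.fromRel (fun x y => x - y = 1 ∨ x - y = ((2*k : ℕ) : ZMod (4*k)))

private lemma zmod_ncast_ne_zero {k a : ℕ} (h1 : 0 < a) (h2 : a < 4*k) :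
    ((a : ZMod (4*k)) ≠ 0) := by
  haveI : NeZero (4*k) := ⟨by omega⟩
  rw [Ne, ZMod.natCast_eq_zero_iff]
  intro h
  have := Nat.le_of_dvd h1 h
  omega

private lemma tk_tk (k : ℕ) : (((2*k:ℕ)) : ZMod (4*k)) + ((2*k:ℕ) : ZMod (4*k)) = 0 := by
  have : (((2*k:ℕ)) : ZMod (4*k)) + ((2*k:ℕ) : ZMod (4*k)) = ((4*k : ℕ) : ZMod (4*k)) := by
    push_cast; ring
  rw [this, ZMod.natCast_self]

private lemma mgOneNeZero {k : ℕ} (hk : 2 ≤ k) : (1 : ZMod (4*k)) ≠ 0 := by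
  have := zmod_ncast_ne_zero (k := k) (a := 1) (by omega) (by omega)
  simpa using this

private lemma tk_ne_zero {k : ℕ} (hk : 2 ≤ k) : ((2*k : ℕ) : ZMod (4*k)) ≠ 0 :=
  zmod_ncast_ne_zero (by omega) (by omega)

private lemma Mg_adj {k : ℕ} (hk : 2 ≤ k) (x y : ZMod (4*k)) :
    (Mg k).Adj x y ↔ (y = x - 1 ∨ y = x + 1 ∨ y = x + ((2*k:ℕ) : ZMod (4*k))) := by
  have h2 := tk_tk k
  rw [Mg, SimpleGraph.fromRel_adj]
  constructor
  · rintro ⟨hne, (h | h) | (h | h)⟩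
    · exact Or.inl (by linear_combination -h)
    · exact Or.inr (Or.inr (by linear_combination -h - h2))
    · exact Or.inr (Or.inl (by linear_combination h))
    · exact Or.inr (Or.inr (by linear_combination h))
  · rintro (rfl | rfl | rfl)
    · exact ⟨fun heq => mgOneNeZero hk (by linear_combination heq),
        Or.inl (Or.inl (by ring))⟩
    · exact ⟨fun heq => mgOneNeZero hk (by linear_combination -heq),
        Or.inr (Or.inl (by ring))⟩
    · exact ⟨fun heq => tk_ne_zero hk (by linear_combination -heq),
        Or.inl (Or.inr (by linear_combination -h2))⟩

private lemma zmod_cast_inj {k a b : ℕ} (ha : a < 4*k) (hb : b < 4*k)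
    (h : (a : ZMod (4*k)) = b) : a = b := by
  haveI : NeZero (4*k) := ⟨by omega⟩
  have h2 := congrArg ZMod.val h
  rwa [ZMod.val_cast_of_lt ha, ZMod.val_cast_of_lt hb] at h2

private def qmap (k m : ℕ) : Fin (4*k*m) → ZMod (4*k) := fun u => ((u.val / m : ℕ) : ZMod (4*k))

private lemma fiber_card {k m : ℕ} (hk : 2 ≤ k) (hm : 0 < m) (c : ZMod (4*k)) :
    (univ.filter (fun u : Fin (4*k*m) => qmap k m u = c)).card = m := by
  haveI : NeZero (4*k) := ⟨by omega⟩
  have key : ∀ u : Fin (4*k*m), (qmap k m u = c ↔ u.val / m = ZMod.val c) := by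
    intro u
    have hlt : u.val / m < 4*k := (Nat.div_lt_iff_lt_mul hm).2 (by
      have := u.isLt; omega)
    constructor
    · intro h
      have h2 := congrArg ZMod.val h
      simp only [qmap] at h2
      rwa [ZMod.val_cast_of_lt hlt] at h2
    · intro h
      rw [qmap, h, ZMod.natCast_val, ZMod.cast_id]
  conv_rhs => rw [← Finset.card_fin m]
  refine Finset.card_bij' (fun u _ => (⟨u.val % m, Nat.mod_lt _ hm⟩ : Fin m))
    (fun i _ => (⟨ZMod.val c * m + i.val, by
      have h1 := ZMod.val_lt c
      have h2 : (ZMod.val c + 1) * m ≤ 4*k*m := Nat.mul_le_mul_right m (by omega)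
      have h3 := i.isLt
      nlinarith⟩ : Fin (4*k*m))) ?_ ?_ ?_ ?_
  · intro u hu; exact Finset.mem_univ _
  · intro i _
    simp only [Finset.mem_filter, Finset.mem_univ, true_and, key]
    show (ZMod.val c * m + i.val) / m = ZMod.val c
    rw [add_comm, Nat.add_mul_div_right _ _ hm, Nat.div_eq_of_lt i.isLt, zero_add]
  · intro u hu
    simp only [Finset.mem_filter, Finset.mem_univ, true_and, key] at hu
    apply Fin.ext
    show ZMod.val c * m + u.val % m = u.val
    have h := Nat.div_add_mod u.val m
    rw [hu] at h
    rw [mul_comm]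
    exact h
  · intro i _
    apply Fin.ext
    show (ZMod.val c * m + i.val) % m = i.val
    rw [add_comm, Nat.add_mul_mod_self_right, Nat.mod_eq_of_lt i.isLt]

private def Gg (k m : ℕ) : SimpleGraph (Fin (4*k*m)) := (Mg k).comap (qmap k m)

private lemma deg_eq {k m : ℕ} (hk : 2 ≤ k) (hm : 0 < m) [inst : DecidableRel (Gg k m).Adj]
    (v : Fin (4*k*m)) : (Gg k m).degree v = 3 * m := by
  haveI : NeZero (4*k) := ⟨by omega⟩
  classical
  set x : ZMod (4*k) := qmap k m v with hx
  set T : Finset (ZMod (4*k)) :=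
    {x - 1, x + 1, x + ((2*k:ℕ) : ZMod (4*k))} with hT
  have hadj : ∀ u : Fin (4*k*m), (Gg k m).Adj v u ↔ qmap k m u ∈ T := by
    intro u
    rw [Gg, SimpleGraph.comap_adj, Mg_adj hk]
    simp [hT, hx]
  rw [← card_neighborFinset_eq_degree, neighborFinset_eq_filter]
  have h1 : (univ.filter ((Gg k m).Adj v)).card
      = ∑ c ∈ T, ((univ.filter ((Gg k m).Adj v)).filter (fun u => qmap k m u = c)).card := by
    apply Finset.card_eq_sum_card_fiberwise
    intro u hu
    rw [Finset.mem_coe, Finset.mem_filter] at hu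
    exact (hadj u).1 hu.2
  have h2 : ∀ c ∈ T, ((univ.filter ((Gg k m).Adj v)).filter (fun u => qmap k m u = c)).card = m := by
    intro c hc
    rw [Finset.filter_filter]
    have : (univ.filter fun u => (Gg k m).Adj v u ∧ qmap k m u = c)
        = univ.filter (fun u : Fin (4*k*m) => qmap k m u = c) := by
      apply Finset.filter_congr
      intro u _
      simp only [iff_iff_implies_and_implies]
      constructor
      · exact fun h => h.2
      · intro h; exact ⟨(hadj u).2 (h ▸ hc), h⟩
    rw [this, fiber_card hk hm]
  rw [h1, Finset.sum_congr rfl h2, Finset.sum_const, smul_eq_mul]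
  have hcard : T.card = 3 := by
    rw [hT]
    rw [Finset.card_insert_of_notMem, Finset.card_insert_of_notMem, Finset.card_singleton]
    · simp only [Finset.mem_singleton]
      intro h
      have : ((2*k : ℕ) : ZMod (4*k)) = ((1:ℕ) : ZMod (4*k)) := by
        push_cast at h ⊢; linear_combination -h
      have := zmod_cast_inj (by omega) (by omega) this
      omega
    · simp only [Finset.mem_insert, Finset.mem_singleton]
      push_neg
      constructor
      · intro h
        have : ((2 : ℕ) : ZMod (4*k)) = ((0:ℕ) : ZMod (4*k)) := by
          push_cast at h ⊢; linear_combination -h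
        have := zmod_cast_inj (k := k) (by omega) (by omega) this
        omega
      · intro h
        have : ((2*k+1 : ℕ) : ZMod (4*k)) = ((0:ℕ) : ZMod (4*k)) := by
          push_cast at h ⊢; linear_combination -h
        have := zmod_cast_inj (k := k) (by omega) (by omega) this
        omega
  rw [hcard]

private lemma walk_sum {k : ℕ} {x y : ZMod (4*k)} (w : (Mg k).Walk x y) :
    ∃ a b c : ℕ, a + b + c = w.length ∧
      x - y = (a : ZMod (4*k)) - (b : ZMod (4*k)) + 2 * (k : ZMod (4*k)) * c := by
  induction w with
  | nil => exact ⟨0, 0, 0, by simp⟩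
  | @cons x z y h w ih =>
    obtain ⟨a, b, c, hlen, hsum⟩ := ih
    have h4 := tk_tk k
    push_cast at h4
    obtain ⟨hne, (h1 | h1) | (h1 | h1)⟩ := id h
    · exact ⟨a+1, b, c, by simp [hlen, Nat.succ_eq_add_one]; omega,
        by push_cast at h1 ⊢; linear_combination h1 + hsum⟩
    · exact ⟨a, b, c+1, by simp [hlen]; omega,
        by push_cast at h1 ⊢; linear_combination h1 + hsum⟩
    · exact ⟨a, b+1, c, by simp [hlen]; omega,
        by push_cast at h1 ⊢; linear_combination -h1 + hsum⟩
    · exact ⟨a, b, c+1, by simp [hlen]; omega,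
        by push_cast at h1 ⊢; linear_combination -h1 + hsum - h4⟩

private lemma odd_closed_walk {k : ℕ} (hk : 2 ≤ k) {x : ZMod (4*k)} (w : (Mg k).Walk x x)
    (hodd : Odd w.length) : 2*k+1 ≤ w.length := by
  obtain ⟨a, b, c, hlen, hsum⟩ := walk_sum w
  rw [sub_self] at hsum
  have hz : (((a : ℤ) - b + 2*k*c : ℤ) : ZMod (4*k)) = 0 := by
    push_cast
    linear_combination -hsum
  rw [ZMod.intCast_zmod_eq_zero_iff_dvd] at hz
  obtain ⟨t, ht⟩ := hz
  push_cast at ht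
  obtain ⟨L, hL⟩ := hodd
  rw [← hlen] at hL
  rcases lt_trichotomy (2*t - c) 0 with hs | hs | hs
  · obtain ⟨K, hK, hK2⟩ : ∃ K : ℤ, (b : ℤ) - a = 2*K ∧ (k : ℤ) ≤ K := by
      refine ⟨k * (c - 2*t), by linear_combination -ht, ?_⟩
      have h1 : (1 : ℤ) ≤ c - 2*t := by omega
      nlinarith [Int.natCast_nonneg k]
    omega
  · have hc : (c : ℤ) = 2 * t := by omega
    have hab : (a : ℤ) = b := by linear_combination ht - 2*(k:ℤ)*hc
    omega
  · obtain ⟨K, hK, hK2⟩ : ∃ K : ℤ, (a : ℤ) - b = 2*K ∧ (k : ℤ) ≤ K := by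
      refine ⟨k * (2*t - c), by linear_combination ht, ?_⟩
      have h1 : (1 : ℤ) ≤ 2*t - c := by omega
      nlinarith [Int.natCast_nonneg k]
    omega

private lemma int_eq_zero_of {d z : ℤ} (hd : 0 < d) (h : d ∣ z) (h1 : -d < z) (h2 : z < d) :
    z = 0 := by
  rcases h with ⟨e, rfl⟩
  have he1 : e < 1 := by nlinarith
  have he2 : -1 < e := by nlinarith
  have : e = 0 := by omega
  simp [this]

private lemma fin_sub_cast {N : ℕ} (u v : Fin (N+1)) :
    (((u - v).val : ℕ) : ZMod (N+1)) = (u.val : ZMod (N+1)) - (v.val : ZMod (N+1)) := by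
  rw [Fin.sub_def]
  show (((N + 1 - v.val + u.val) % (N+1) : ℕ) : ZMod (N+1)) = _
  have h0 : ((N : ZMod (N+1)) + 1) = 0 := by
    have := ZMod.natCast_self (N+1)
    push_cast at this
    linear_combination this
  rw [ZMod.natCast_mod]
  push_cast [Nat.cast_sub (Nat.le_of_lt v.isLt)]
  linear_combination h0

private lemma no_hom {k : ℕ} (hk : 2 ≤ k) :
    ¬ Nonempty (Mg k →g SimpleGraph.cycleGraph (2*k+1)) := by
  haveI : NeZero (4*k) := ⟨by omega⟩
  haveI : NeZero (2*k) := ⟨by omega⟩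
  classical
  rintro ⟨φ⟩
  set r : ZMod (4*k) → ZMod (2*k+1) := fun v => (((φ v).val : ℕ) : ZMod (2*k+1)) with hr
  have hstep : ∀ {u w : ZMod (4*k)}, (Mg k).Adj u w → r u - r w = 1 ∨ r w - r u = 1 := by
    intro u w h
    have h2 := φ.map_adj h
    rw [SimpleGraph.cycleGraph_adj'] at h2
    rcases h2 with h2 | h2
    · left
      rw [← fin_sub_cast (φ u) (φ w), h2, Nat.cast_one]
    · right
      rw [← fin_sub_cast (φ w) (φ u), h2, Nat.cast_one]
  set S : ZMod (2*k+1) → Finset (ZMod (4*k)) :=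
    fun j => univ.filter (fun v => ∃ t : Fin k, r v = j + 2*((t.val : ℕ) : ZMod (2*k+1)))
    with hS
  -- each vertex is in exactly k of the S j
  have hcount : ∀ v : ZMod (4*k),
      (univ.filter (fun j : ZMod (2*k+1) => v ∈ S j)).card = k := by
    intro v
    have himg : univ.filter (fun j : ZMod (2*k+1) => v ∈ S j)
        = Finset.image (fun t : Fin k => r v - 2*((t.val : ℕ) : ZMod (2*k+1))) univ := by
      ext j
      simp only [Finset.mem_filter, Finset.mem_univ, true_and, Finset.mem_image, hS]
      constructor
      · rintro ⟨t, ht⟩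
        exact ⟨t, by rw [ht]; ring⟩
      · rintro ⟨t, ht⟩
        exact ⟨t, by rw [← ht]; ring⟩
    have hinj2 : Function.Injective (fun t : Fin k => r v - 2*((t.val : ℕ) : ZMod (2*k+1))) := by
      intro t s hts
      simp only at hts
      have h2 : ((2*t.val : ℕ) : ZMod (2*k+1)) = ((2*s.val : ℕ) : ZMod (2*k+1)) := by
        push_cast
        linear_combination -hts
      have h3 := congrArg ZMod.val h2
      rw [ZMod.val_cast_of_lt (by omega), ZMod.val_cast_of_lt (by omega)] at h3
      exact Fin.ext (by omega)
    rw [himg, Finset.card_image_of_injective _ hinj2, Finset.card_fin]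
  -- double counting
  have hsum : ∑ j : ZMod (2*k+1), (S j).card = 4*k*k := by
    have h1 : ∀ j : ZMod (2*k+1), (S j).card = ∑ v : ZMod (4*k), ite (v ∈ S j) 1 0 := by
      intro j
      rw [hS]
      simp only [Finset.mem_filter, Finset.mem_univ, true_and]
      exact Finset.card_filter _ _
    have h2 : ∀ v : ZMod (4*k), (∑ j : ZMod (2*k+1), ite (v ∈ S j) 1 0) = k := by
      intro v
      calc (∑ j : ZMod (2*k+1), ite (v ∈ S j) 1 0)
          = (univ.filter (fun j : ZMod (2*k+1) => v ∈ S j)).card :=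
            (Finset.card_filter _ _).symm
        _ = k := hcount v
    calc ∑ j : ZMod (2*k+1), (S j).card
        = ∑ j : ZMod (2*k+1), ∑ v : ZMod (4*k), ite (v ∈ S j) 1 0 :=
          Finset.sum_congr rfl (fun j _ => h1 j)
      _ = ∑ v : ZMod (4*k), ∑ j : ZMod (2*k+1), ite (v ∈ S j) 1 0 := Finset.sum_comm
      _ = ∑ _v : ZMod (4*k), k := Finset.sum_congr rfl (fun v _ => h2 v)
      _ = 4*k*k := by rw [Finset.sum_const, smul_eq_mul, Finset.card_univ, ZMod.card]
  -- pigeonhole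
  obtain ⟨j, hj⟩ : ∃ j : ZMod (2*k+1), 2*k ≤ (S j).card := by
    by_contra hcon
    push_neg at hcon
    have hle : ∀ j ∈ (univ : Finset (ZMod (2*k+1))), (S j).card ≤ 2*k-1 :=
      fun j _ => by have := hcon j; omega
    have := Finset.sum_le_card_nsmul univ (fun j => (S j).card) (2*k-1) hle
    rw [hsum, Finset.card_univ, ZMod.card, smul_eq_mul] at this
    obtain ⟨a, ha⟩ : ∃ a, 2*k = a + 1 := ⟨2*k-1, by omega⟩
    rw [show 2*k-1 = a by omega] at this
    nlinarith [this, ha]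
  -- S j is independent
  have hmem : ∀ {v}, v ∈ S j ↔ ∃ t : Fin k, r v = j + 2*((t.val : ℕ) : ZMod (2*k+1)) := by
    intro v
    rw [hS]
    simp only [Finset.mem_filter, Finset.mem_univ, true_and]
  have hindep : ∀ u ∈ S j, ∀ w ∈ S j, ¬ (Mg k).Adj u w := by
    intro u hu w hw hadj
    obtain ⟨t, ht⟩ := hmem.1 hu
    obtain ⟨s, hs⟩ := hmem.1 hw
    have hb1 : (t.val : ℤ) < k := by exact_mod_cast t.isLt
    have hb2 : (s.val : ℤ) < k := by exact_mod_cast s.isLt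
    have hb3 : (0:ℤ) ≤ t.val := Int.natCast_nonneg _
    have hb4 : (0:ℤ) ≤ s.val := Int.natCast_nonneg _
    rcases hstep hadj with h1 | h1
    · have hz : (((2*(t.val:ℤ) - 2*s.val - 1) : ℤ) : ZMod (2*k+1)) = 0 := by
        push_cast
        linear_combination h1 - ht + hs
      rw [ZMod.intCast_zmod_eq_zero_iff_dvd] at hz
      have hdd : ((2*k+1 : ℕ) : ℤ) ∣ (2*(t.val:ℤ) - 2*s.val - 1) := by exact_mod_cast hz
      have h0 := int_eq_zero_of (d := ((2*k+1 : ℕ) : ℤ))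
        (z := 2*(t.val:ℤ) - 2*s.val - 1) (by push_cast; omega) hdd
        (by push_cast; omega) (by push_cast; omega)
      omega
    · have hz : (((2*(s.val:ℤ) - 2*t.val - 1) : ℤ) : ZMod (2*k+1)) = 0 := by
        push_cast
        linear_combination h1 - hs + ht
      rw [ZMod.intCast_zmod_eq_zero_iff_dvd] at hz
      have hdd : ((2*k+1 : ℕ) : ℤ) ∣ (2*(s.val:ℤ) - 2*t.val - 1) := by exact_mod_cast hz
      have h0 := int_eq_zero_of (d := ((2*k+1 : ℕ) : ℤ))
        (z := 2*(s.val:ℤ) - 2*t.val - 1) (by push_cast; omega) hdd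
        (by push_cast; omega) (by push_cast; omega)
      omega
  -- kernel of castHom
  have hdvd : (2*k) ∣ (4*k) := ⟨2, by ring⟩
  set f : ZMod (4*k) →+* ZMod (2*k) := ZMod.castHom hdvd (ZMod (2*k)) with hf
  have hker : ∀ d : ZMod (4*k), f d = 0 → d = 0 ∨ d = ((2*k:ℕ) : ZMod (4*k)) := by
    intro d hd
    have h1 : f ((d.val : ℕ) : ZMod (4*k)) = ((d.val : ℕ) : ZMod (2*k)) := map_natCast f d.val
    rw [ZMod.natCast_rightInverse d] at h1
    rw [hd] at h1
    have h2 : (2*k) ∣ d.val := by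
      rwa [eq_comm, ZMod.natCast_eq_zero_iff] at h1
    have h3 := ZMod.val_lt d
    obtain ⟨e, he⟩ := h2
    have h4 : d.val = 0 ∨ d.val = 2*k := by
      rcases Nat.lt_or_ge e 2 with h5 | h5
      · interval_cases e <;> omega
      · exfalso
        have : 2*k*2 ≤ 2*k*e := Nat.mul_le_mul_left _ h5
        omega
    rcases h4 with h4 | h4
    · left
      rw [← ZMod.natCast_rightInverse d, h4, Nat.cast_zero]
    · right
      rw [← ZMod.natCast_rightInverse d, h4]
  have hker2 : ∀ u w : ZMod (4*k), f u = f w → u = w ∨ u = w + ((2*k:ℕ) : ZMod (4*k)) := by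
    intro u w h
    have : f (u - w) = 0 := by rw [map_sub, h, sub_self]
    rcases hker _ this with h2 | h2
    · left; linear_combination h2
    · right; linear_combination h2
  -- injectivity on S j
  have hinj : Set.InjOn f (S j) := by
    intro u hu w hw h
    rcases hker2 u w h with h2 | h2
    · exact h2
    · exact absurd ((Mg_adj hk w u).2 (Or.inr (Or.inr h2))) (hindep w hw u hu)
  have hcard2 : (S j).card ≤ 2*k := by
    calc (S j).card = ((S j).image f).card := (Finset.card_image_of_injOn hinj).symm
      _ ≤ (univ : Finset (ZMod (2*k))).card := Finset.card_le_card (Finset.subset_univ _)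
      _ = 2*k := by rw [Finset.card_univ, ZMod.card]
  have hcardeq : ((S j).image f).card = Fintype.card (ZMod (2*k)) := by
    rw [Finset.card_image_of_injOn hinj, ZMod.card]
    omega
  have himg_univ : (S j).image f = univ := Finset.eq_univ_of_card _ hcardeq
  have htotal : ∀ u : ZMod (4*k), u ∈ S j ∨ u + ((2*k:ℕ) : ZMod (4*k)) ∈ S j := by
    intro u
    have : f u ∈ (S j).image f := by rw [himg_univ]; exact Finset.mem_univ _
    obtain ⟨w, hw, hfw⟩ := Finset.mem_image.1 this
    rcases hker2 w u hfw with h2 | h2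
    · left; rwa [← h2]
    · right; rwa [← h2]
  -- alternation
  have hxor : ∀ u : ZMod (4*k), (u + 1 ∈ S j ↔ ¬ (u ∈ S j)) := by
    intro u
    constructor
    · intro h1 h2
      exact hindep u h2 (u+1) h1 ((Mg_adj hk u (u+1)).2 (Or.inr (Or.inl rfl)))
    · intro h1
      rcases htotal u with h2 | h2
      · exact absurd h2 h1
      rcases htotal (u+1) with h3 | h3
      · exact h3
      exfalso
      have hadj : (Mg k).Adj (u + ((2*k:ℕ) : ZMod (4*k))) (u + 1 + ((2*k:ℕ) : ZMod (4*k))) :=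
        (Mg_adj hk _ _).2 (Or.inr (Or.inl (by ring)))
      exact hindep _ h2 _ h3 hadj
  have halt : ∀ i : ℕ, (((i:ℕ) : ZMod (4*k)) ∈ S j ↔ (((0:ℕ) : ZMod (4*k)) ∈ S j ↔ Even i)) := by
    intro i
    induction i with
    | zero => simp
    | succ i ih =>
      have hx := hxor ((i:ℕ) : ZMod (4*k))
      have hc : (((i+1:ℕ)) : ZMod (4*k)) = ((i:ℕ) : ZMod (4*k)) + 1 := by push_cast; ring
      rw [hc, hx, ih, Nat.even_add_one]
      tauto
  have h2k := halt (2*k)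
  have heven : Even (2*k) := ⟨k, by ring⟩
  have hchord : ¬ (((0:ℕ) : ZMod (4*k)) ∈ S j ∧ ((2*k : ℕ) : ZMod (4*k)) ∈ S j) := by
    rintro ⟨h1, h2⟩
    have hadj : (Mg k).Adj ((0:ℕ) : ZMod (4*k)) ((2*k:ℕ) : ZMod (4*k)) :=
      (Mg_adj hk _ _).2 (Or.inr (Or.inr (by ring)))
    exact hindep _ h1 _ h2 hadj
  have htot0 := htotal ((0:ℕ) : ZMod (4*k))
  rw [show ((0:ℕ) : ZMod (4*k)) + ((2*k:ℕ) : ZMod (4*k)) = ((2*k:ℕ) : ZMod (4*k)) by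
    rw [Nat.cast_zero, zero_add]] at htot0
  tauto


theorem stmt_15 (k n : ℕ) (hk : 2 ≤ k) (hn : 0 < n) (hdvd : 4 * k ∣ n) :
    ∃ G : SimpleGraph (Fin n),
      (∀ (v : Fin n) (c : G.Walk v v), c.IsCycle → Odd c.length → 2 * k + 1 ≤ c.length) ∧
      4 * k * (@SimpleGraph.minDegree (Fin n) G _ (Classical.decRel _)) = 3 * n ∧
      ¬ Nonempty (G →g SimpleGraph.cycleGraph (2 * k + 1)) := by
  haveI : NeZero (4*k) := ⟨by omega⟩
  obtain ⟨m, rfl⟩ := hdvd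
  have hm : 0 < m := by
    rcases Nat.eq_zero_or_pos m with h | h
    · subst h; simp at hn
    · exact h
  have qh : Gg k m →g Mg k := ⟨qmap k m, fun {a b} h => h⟩
  refine ⟨Gg k m, ?_, ?_, ?_⟩
  · intro v c _ hodd
    have h1 := odd_closed_walk hk (c.map qh)
      (by rw [SimpleGraph.Walk.length_map]; exact hodd)
    rwa [SimpleGraph.Walk.length_map] at h1
  · letI inst : DecidableRel (Gg k m).Adj := Classical.decRel _
    haveI hne : Nonempty (Fin (4*k*m)) := ⟨⟨0, by omega⟩⟩
    show 4*k*(Gg k m).minDegree = 3*(4*k*m)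
    obtain ⟨v, hv⟩ := SimpleGraph.exists_minimal_degree_vertex (Gg k m)
    rw [hv, deg_eq hk hm]
    ring
  · rintro ⟨ψ⟩
    refine no_hom hk ⟨ψ.comp ?_⟩
    have hbound : ∀ x : ZMod (4*k), ZMod.val x * m < 4*k*m :=
      fun x => (Nat.mul_lt_mul_right hm).2 (ZMod.val_lt x)
    have hq : ∀ x : ZMod (4*k), qmap k m ⟨ZMod.val x * m, hbound x⟩ = x := by
      intro x
      show ((ZMod.val x * m / m : ℕ) : ZMod (4*k)) = x
      rw [Nat.mul_div_cancel _ hm]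
      exact ZMod.natCast_rightInverse x
    exact ⟨fun x => ⟨ZMod.val x * m, hbound x⟩, by
      intro a b hab
      show (Mg k).Adj (qmap k m ⟨ZMod.val a * m, hbound a⟩) (qmap k m ⟨ZMod.val b * m, hbound b⟩)
      rw [hq a, hq b]
      exact hab⟩
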